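/- In misère Partizan Kayles, if the total number of squares in a position G is congruent to 1 modulo 3, then Right wins G regardless of who moves first (o⁻(G) = R). -/
import Mathlib


/-- Add a strip of length `k` to a position (strips of length 0 are discarded). -/
def addStrip (m : Multiset ℕ) (k : ℕ) : Multiset ℕ := if k = 0 then m else k ::ₘ m

/-- Left removes one square from a strip of length `n ≥ 1`, leaving strips `i` and `n-1-i`. -/
def LeftMove (G G' : Multiset ℕ) : Prop :=
  ∃ n ∈ G, ∃ i, i + 1 ≤ n ∧ G' = addStrip (addStrip (G.erase n) i) (n - 1 - i)

/-- Right removes two adjacent squares from a strip of length `n ≥ 2`, leaving `i` and `n-2-i`. -/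
def RightMove (G G' : Multiset ℕ) : Prop :=
  ∃ n ∈ G, ∃ i, i + 2 ≤ n ∧ G' = addStrip (addStrip (G.erase n) i) (n - 2 - i)

mutual
  /-- Misère play: Left, to move, wins (a player unable to move wins). -/
  inductive LeftWinsMover : Multiset ℕ → Prop
    | cannot (G : Multiset ℕ) : (¬ ∃ G', LeftMove G G') → LeftWinsMover G
    | move (G G' : Multiset ℕ) : LeftMove G G' → LeftWinsWaiter G' → LeftWinsMover G
  /-- Misère play: Left wins with Right to move. -/
  inductive LeftWinsWaiter : Multiset ℕ → Prop
    | intro (G : Multiset ℕ) : (∃ G', RightMove G G') →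
        (∀ G', RightMove G G' → LeftWinsMover G') → LeftWinsWaiter G
end

inductive Outcome | L | N | P | R
  deriving DecidableEq

open Classical in
/-- The misère outcome `o⁻(G)`. -/
noncomputable def outcome (G : Multiset ℕ) : Outcome :=
  if LeftWinsMover G then (if LeftWinsWaiter G then Outcome.L else Outcome.N)
  else (if LeftWinsWaiter G then Outcome.P else Outcome.R)

/-- The partial order on outcomes: `L` greatest, `R` least, `N` and `P` incomparable. -/
def Outcome.le (a b : Outcome) : Prop := a = b ∨ a = Outcome.R ∨ b = Outcome.L

/-- `pos k j` is the position `kS₁ + jS₂`. -/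
def pos (k j : ℕ) : Multiset ℕ := Multiset.replicate k 1 + Multiset.replicate j 2

lemma addStrip_sum (m : Multiset ℕ) (k : ℕ) : (addStrip m k).sum = m.sum + k := by
  unfold addStrip; split <;> simp [*, Nat.add_comm]

lemma zero_not_mem_addStrip {m : Multiset ℕ} (h : 0 ∉ m) (k : ℕ) : 0 ∉ addStrip m k := by
  unfold addStrip; split
  · exact h
  · intro hm
    rcases Multiset.mem_cons.1 hm with h0 | h0
    · exact ‹¬ k = 0› h0.symm
    · exact h h0

lemma zero_not_mem_erase {G : Multiset ℕ} (h : 0 ∉ G) (n : ℕ) : 0 ∉ G.erase n :=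
  fun hm => h (Multiset.mem_of_mem_erase hm)

lemma leftMove_spec {G G' : Multiset ℕ} (hm : LeftMove G G') (h0 : 0 ∉ G) :
    G'.sum + 1 = G.sum ∧ 0 ∉ G' := by
  obtain ⟨n, hn, i, hi, hG'⟩ := hm
  have hsum : n + (G.erase n).sum = G.sum := by
    conv_rhs => rw [← Multiset.cons_erase hn]
    simp
  constructor
  · rw [hG', addStrip_sum, addStrip_sum]; omega
  · rw [hG']
    exact zero_not_mem_addStrip (zero_not_mem_addStrip (zero_not_mem_erase h0 n) i) _

lemma rightMove_spec {G G' : Multiset ℕ} (hm : RightMove G G') (h0 : 0 ∉ G) :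
    G'.sum + 2 = G.sum ∧ 0 ∉ G' := by
  obtain ⟨n, hn, i, hi, hG'⟩ := hm
  have hsum : n + (G.erase n).sum = G.sum := by
    conv_rhs => rw [← Multiset.cons_erase hn]
    simp
  constructor
  · rw [hG', addStrip_sum, addStrip_sum]; omega
  · rw [hG']
    exact zero_not_mem_addStrip (zero_not_mem_addStrip (zero_not_mem_erase h0 n) i) _

lemma exists_leftMove {G : Multiset ℕ} (hne : G ≠ 0) (h0 : 0 ∉ G) : ∃ G', LeftMove G G' := by
  obtain ⟨n, hn⟩ := Multiset.exists_mem_of_ne_zero hne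
  have : 1 ≤ n := by
    rcases Nat.eq_zero_or_pos n with h | h
    · exact absurd (h ▸ hn) h0
    · exact h
  exact ⟨_, n, hn, 0, by omega, rfl⟩

lemma main_invariant : ∀ N : ℕ, ∀ G : Multiset ℕ, 0 ∉ G → G.sum = N →
    (G.sum % 3 = 0 → ¬ LeftWinsWaiter G) ∧
    (G.sum % 3 = 1 → ¬ LeftWinsMover G ∧ ¬ LeftWinsWaiter G) ∧
    (G.sum % 3 = 2 → G ≠ 0 → ¬ LeftWinsMover G) := by
  intro N
  induction N using Nat.strong_induction_on with
  | _ N ih =>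
    intro G h0 hN
    subst hN
    refine ⟨?_, ?_, ?_⟩
    · -- sum ≡ 0 : ¬ LeftWinsWaiter
      intro hmod hW
      rcases hW with ⟨_, ⟨G', hR⟩, hall⟩
      obtain ⟨hs, h0'⟩ := rightMove_spec hR h0
      have h1 : G'.sum % 3 = 1 := by omega
      have hlt : G'.sum < G.sum := by omega
      exact ((ih G'.sum hlt G' h0' rfl).2.1 h1).1 (hall G' hR)
    · -- sum ≡ 1
      intro hmod
      constructor
      · -- ¬ LeftWinsMover
        intro hM
        cases hM with
        | cannot _ hno =>
          have hne : G ≠ 0 := by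
            intro hG; rw [hG] at hmod; simp at hmod
          exact hno (exists_leftMove hne h0)
        | move _ G' hL hW =>
          obtain ⟨hs, h0'⟩ := leftMove_spec hL h0
          have h1 : G'.sum % 3 = 0 := by omega
          have hlt : G'.sum < G.sum := by omega
          exact (ih G'.sum hlt G' h0' rfl).1 h1 hW
      · -- ¬ LeftWinsWaiter
        intro hW
        rcases hW with ⟨_, ⟨G', hR⟩, hall⟩
        obtain ⟨hs, h0'⟩ := rightMove_spec hR h0
        have h2 : G'.sum % 3 = 2 := by omega
        have hne : G' ≠ 0 := by
          intro hG'; rw [hG'] at hs; simp at hs; omega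
        have hlt : G'.sum < G.sum := by omega
        exact (ih G'.sum hlt G' h0' rfl).2.2 h2 hne (hall G' hR)
    · -- sum ≡ 2 and G ≠ 0 : ¬ LeftWinsMover
      intro hmod hne hM
      cases hM with
      | cannot _ hno => exact hno (exists_leftMove hne h0)
      | move _ G' hL hW =>
        obtain ⟨hs, h0'⟩ := leftMove_spec hL h0
        have h1 : G'.sum % 3 = 1 := by omega
        have hlt : G'.sum < G.sum := by omega
        exact ((ih G'.sum hlt G' h0' rfl).2.1 h1).2 hW

theorem kayles_sum_one_mod_three (G : Multiset ℕ) (hG : 0 ∉ G)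
    (h : G.sum % 3 = 1) : outcome G = Outcome.R := by
  obtain ⟨hM, hW⟩ := (main_invariant G.sum G hG rfl).2.1 h
  simp [outcome, hM, hW]
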